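/- If n·aₙ → 0 and the sequence (F(vₙ)) with vₙ := 1 − 1/n is Cauchy, then |F(vₘ) − sₙ| → 0 as m,n → ∞. -/

import Mathlib

open Filter Topology

set_option maxHeartbeats 1000000

theorem tauber_cauchy_variant (a : ℕ → ℝ)
    (hTaub : Tendsto (fun n : ℕ => (n : ℝ) * a n) atTop (nhds 0))
    (hC : CauchySeq (fun n : ℕ => ∑' i, a i * (1 - 1/(n:ℝ))^i)) :
    ∀ ε : ℝ, 0 < ε → ∃ N : ℕ, ∀ m n : ℕ, N ≤ m → N ≤ n →
      |(∑' i, a i * (1 - 1/(m:ℝ))^i) - ∑ i ∈ Finset.range (n+1), a i| ≤ ε := by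
  have habs : Tendsto (fun n : ℕ => |(n : ℝ) * a n|) atTop (nhds 0) := by
    simpa using hTaub.abs
  obtain ⟨C, hCub⟩ := habs.bddAbove_range
  set M : ℝ := max C |a 0| with hM
  have hB : ∀ i : ℕ, |a i| ≤ M := by
    intro i
    rcases Nat.eq_zero_or_pos i with h0 | h1
    · subst h0; exact le_max_right _ _
    · have hi : |(i : ℝ) * a i| ≤ C := hCub ⟨i, rfl⟩
      have h1' : (1 : ℝ) ≤ (i : ℝ) := by exact_mod_cast h1
      have : |a i| ≤ |(i : ℝ) * a i| := by
        rw [abs_mul, abs_of_nonneg (by positivity : (0:ℝ) ≤ (i:ℝ))]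
        nlinarith [abs_nonneg (a i)]
      exact this.trans (hi.trans (le_max_left _ _))
  have hsum : ∀ x : ℝ, 0 ≤ x → x < 1 → Summable (fun i => |a i * x ^ i|) := by
    intro x hx0 hx1
    refine Summable.of_nonneg_of_le (fun i => abs_nonneg _) (fun i => ?_)
      ((summable_geometric_of_lt_one hx0 hx1).mul_left M)
    rw [abs_mul, abs_pow, abs_of_nonneg hx0]
    exact mul_le_mul_of_nonneg_right (hB i) (pow_nonneg hx0 i)
  -- Key: |F(vₙ) - sₙ| is eventually small
  have key : ∀ ε : ℝ, 0 < ε → ∃ N : ℕ, ∀ n : ℕ, N ≤ n →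
      |(∑' i, a i * (1 - 1/(n:ℝ))^i) - ∑ i ∈ Finset.range (n+1), a i| ≤ ε := by
    intro ε hε
    obtain ⟨N₀, hN₀⟩ := (Metric.tendsto_atTop.mp hTaub) (ε/3) (by positivity)
    have hces := habs.cesaro
    obtain ⟨N₁, hN₁⟩ := (Metric.tendsto_atTop.mp hces) (ε/6) (by positivity)
    refine ⟨max (max N₀ N₁) 1, fun n hn => ?_⟩
    have hn1 : 1 ≤ n := le_trans (le_max_right _ _) hn
    have hnN₀ : N₀ ≤ n := le_trans (le_max_left _ _) (le_trans (le_max_left _ _) hn)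
    have hnN₁ : N₁ ≤ n := le_trans (le_max_right _ _) (le_trans (le_max_left _ _) hn)
    have hnR : (1 : ℝ) ≤ (n : ℝ) := by exact_mod_cast hn1
    have hnpos : (0 : ℝ) < (n : ℝ) := by linarith
    set x : ℝ := 1 - 1/(n:ℝ) with hxdef
    have h1x : 1 - x = 1/(n:ℝ) := by ring
    have hx0 : 0 ≤ x := by
      have h : 1/(n:ℝ) ≤ 1 := by
        rw [div_le_one hnpos]; exact hnR
      simp only [hxdef]; linarith
    have hx1 : x < 1 := by
      have : 0 < 1/(n:ℝ) := by positivity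
      simp only [hxdef]; linarith
    clear_value x
    have hSabs : Summable (fun i => |a i * x ^ i|) := hsum x hx0 hx1
    have hS : Summable (fun i => a i * x ^ i) := hSabs.of_abs
    have hsplit := Summable.sum_add_tsum_nat_add (f := fun i => a i * x ^ i) (n+1) hS
    have heq : (∑' i, a i * x ^ i) - ∑ i ∈ Finset.range (n+1), a i
        = (∑ i ∈ Finset.range (n+1), a i * (x ^ i - 1))
          + ∑' i, a (i + (n+1)) * x ^ (i + (n+1)) := by
      rw [← hsplit]
      simp only [mul_sub, mul_one, Finset.sum_sub_distrib]
      ring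
    -- Head bound
    set S : ℝ := ∑ i ∈ Finset.range (n+1), |(i : ℝ) * a i| with hSdef
    have hSnn : 0 ≤ S := Finset.sum_nonneg fun i _ => abs_nonneg _
    have hces' : ((n+1 : ℕ) : ℝ)⁻¹ * S ≤ ε/6 := by
      have h := hN₁ (n+1) (le_trans hnN₁ (Nat.le_succ n))
      rw [Real.dist_eq, sub_zero] at h
      exact le_trans (le_abs_self _) h.le
    have hhead : |∑ i ∈ Finset.range (n+1), a i * (x ^ i - 1)| ≤ ε/3 := by
      have hterm : ∀ i ∈ Finset.range (n+1), |a i * (x ^ i - 1)| ≤ (1-x) * |(i:ℝ) * a i| := by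
        intro i _
        have hxi1 : x ^ i ≤ 1 := pow_le_one₀ hx0 hx1.le
        have hbern : 1 - x ^ i ≤ (i : ℝ) * (1 - x) := by
          have := one_add_mul_le_pow (a := x - 1) (by linarith) i
          have h2 : 1 + (i : ℝ) * (x - 1) ≤ x ^ i := by
            simpa using this
          nlinarith
        rw [abs_mul, abs_of_nonpos (by linarith : x ^ i - 1 ≤ 0), abs_mul,
          abs_of_nonneg (by positivity : (0:ℝ) ≤ (i:ℝ))]
        calc |a i| * -(x ^ i - 1) = |a i| * (1 - x ^ i) := by ring
          _ ≤ |a i| * ((i : ℝ) * (1 - x)) :=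
            mul_le_mul_of_nonneg_left hbern (abs_nonneg _)
          _ = (1 - x) * ((i:ℝ) * |a i|) := by ring
      calc |∑ i ∈ Finset.range (n+1), a i * (x ^ i - 1)|
          ≤ ∑ i ∈ Finset.range (n+1), |a i * (x ^ i - 1)| := Finset.abs_sum_le_sum_abs _ _
        _ ≤ ∑ i ∈ Finset.range (n+1), (1-x) * |(i:ℝ) * a i| := Finset.sum_le_sum hterm
        _ = (1-x) * S := by rw [Finset.mul_sum]
        _ = S / (n:ℝ) := by rw [h1x]; ring
        _ ≤ ε/3 := by
            rw [div_le_iff₀ hnpos]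
            have hS' : S ≤ ((n:ℝ)+1) * (ε/6) := by
              have hpos : (0:ℝ) < ((n+1 : ℕ) : ℝ) := by positivity
              have := mul_le_mul_of_nonneg_left hces' (le_of_lt hpos)
              rw [← mul_assoc, mul_inv_cancel₀ (ne_of_gt hpos), one_mul] at this
              push_cast at this
              linarith
            nlinarith
    -- Tail bound
    have htailsummable : Summable (fun i => |a (i + (n+1)) * x ^ (i + (n+1))|) :=
      (summable_nat_add_iff (f := fun i => |a i * x ^ i|) (n+1)).2 hSabs
    have htail : |∑' i, a (i + (n+1)) * x ^ (i + (n+1))| ≤ ε/3 := by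
      have hgsum : Summable (fun i : ℕ => (ε/(3*(n:ℝ))) * x ^ i) :=
        (summable_geometric_of_lt_one hx0 hx1).mul_left _
      have hptwise : ∀ i : ℕ, |a (i + (n+1)) * x ^ (i + (n+1))| ≤ (ε/(3*(n:ℝ))) * x ^ i := by
        intro i
        set j := i + (n+1) with hjdef
        have hjN₀ : N₀ ≤ j := le_trans hnN₀ (by omega)
        have hja : |(j : ℝ) * a j| ≤ ε/3 := by
          have := hN₀ j hjN₀
          rw [Real.dist_eq, sub_zero] at this
          exact this.le
        have hjn : (n : ℝ) ≤ (j : ℝ) := by exact_mod_cast (by omega : n ≤ j)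
        have haj : |a j| ≤ ε/(3*(n:ℝ)) := by
          rw [abs_mul, abs_of_nonneg (by positivity : (0:ℝ) ≤ (j:ℝ))] at hja
          rw [le_div_iff₀ (by positivity)]
          nlinarith [abs_nonneg (a j)]
        have hxj : x ^ j ≤ x ^ i :=
          pow_le_pow_of_le_one hx0 hx1.le (by omega)
        rw [abs_mul, abs_pow, abs_of_nonneg hx0]
        exact mul_le_mul haj hxj (by positivity) (by positivity)
      calc |∑' i, a (i + (n+1)) * x ^ (i + (n+1))|
          ≤ ∑' i, |a (i + (n+1)) * x ^ (i + (n+1))| := by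
            have h := norm_tsum_le_tsum_norm
              (f := fun i : ℕ => a (i + (n+1)) * x ^ (i + (n+1)))
              (by simpa only [Real.norm_eq_abs] using htailsummable)
            simpa only [Real.norm_eq_abs] using h
        _ ≤ ∑' i : ℕ, (ε/(3*(n:ℝ))) * x ^ i :=
            Summable.tsum_le_tsum hptwise htailsummable hgsum
        _ = (ε/(3*(n:ℝ))) * (1 - x)⁻¹ := by
            rw [tsum_mul_left, tsum_geometric_of_lt_one hx0 hx1]
        _ = ε/3 := by
            rw [h1x, one_div, inv_inv]
            field_simp
      -- end tail
    calc |(∑' i, a i * x ^ i) - ∑ i ∈ Finset.range (n+1), a i|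
        = |(∑ i ∈ Finset.range (n+1), a i * (x ^ i - 1))
            + ∑' i, a (i + (n+1)) * x ^ (i + (n+1))| := by rw [heq]
      _ ≤ |∑ i ∈ Finset.range (n+1), a i * (x ^ i - 1)|
            + |∑' i, a (i + (n+1)) * x ^ (i + (n+1))| := abs_add_le _ _
      _ ≤ ε/3 + ε/3 := add_le_add hhead htail
      _ ≤ ε := by linarith
  -- Combine with the Cauchy hypothesis
  intro ε hε
  obtain ⟨N₂, h₂⟩ := Metric.cauchySeq_iff.mp hC (ε/2) (by positivity)
  obtain ⟨N₃, h₃⟩ := key (ε/2) (by positivity)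
  refine ⟨max N₂ N₃, fun m n hm hn => ?_⟩
  have hm₂ : N₂ ≤ m := le_trans (le_max_left _ _) hm
  have hn₂ : N₂ ≤ n := le_trans (le_max_left _ _) hn
  have hn₃ : N₃ ≤ n := le_trans (le_max_right _ _) hn
  have hdist := h₂ m hm₂ n hn₂
  rw [Real.dist_eq] at hdist
  have h3 := h₃ n hn₃
  calc |(∑' i, a i * (1 - 1/(m:ℝ))^i) - ∑ i ∈ Finset.range (n+1), a i|
      ≤ |(∑' i, a i * (1 - 1/(m:ℝ))^i) - (∑' i, a i * (1 - 1/(n:ℝ))^i)|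
        + |(∑' i, a i * (1 - 1/(n:ℝ))^i) - ∑ i ∈ Finset.range (n+1), a i| := by
          have := abs_sub_le (∑' i, a i * (1 - 1/(m:ℝ))^i)
            (∑' i, a i * (1 - 1/(n:ℝ))^i) (∑ i ∈ Finset.range (n+1), a i)
          exact this
    _ ≤ ε/2 + ε/2 := add_le_add hdist.le h3
    _ = ε := by ring
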